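/- Let μ₀ > 0 and C, M > 0. Suppose N ≥ 0 and D ≥ 0 satisfy N ≤ C M² e^{-2sμ₀} + C e^{2Cs} D² for all s ≥ 0. Then there exist constants C' > 0 and θ ∈ (0,1) (depending only on C, M, μ₀) such that N ≤ C' (D² + D^{2θ}), with θ = μ₀/(C+μ₀). -/
import Mathlib


/-- Hölder-type conditional stability: if
`N ≤ C M² e^{-2sμ₀} + C e^{2Cs} D²` for all `s ≥ 0`, then
`N ≤ C'(D² + D^{2θ})` with `θ = μ₀/(C+μ₀) ∈ (0,1)` and `C'` depending
only on `C, M, μ₀`. -/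
theorem holder_conditional_stability
    (μ₀ C M : ℝ) (hμ : 0 < μ₀) (hC : 0 < C) (hM : 0 < M) :
    ∃ C' > 0, ∀ N D : ℝ, 0 ≤ N → 0 ≤ D →
      (∀ s : ℝ, 0 ≤ s → N ≤ C * M ^ 2 * Real.exp (-2 * s * μ₀)
        + C * Real.exp (2 * C * s) * D ^ 2) →
      0 < μ₀ / (C + μ₀) ∧ μ₀ / (C + μ₀) < 1 ∧
      N ≤ C' * (D ^ 2 + D ^ (2 * (μ₀ / (C + μ₀)))) := by
  have hCμ : 0 < C + μ₀ := by linarith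
  set θ : ℝ := μ₀ / (C + μ₀) with hθdef
  have hθpos : 0 < θ := div_pos hμ hCμ
  have hθlt : θ < 1 := (div_lt_one hCμ).2 (by linarith)
  set t : ℝ := 2 * θ with htdef
  have ht0 : 0 < t := by positivity
  have ht2 : t < 2 := by simp only [htdef]; linarith
  have hMt : (0:ℝ) < M ^ ((2:ℝ) - t) := Real.rpow_pos_of_pos hM _
  refine ⟨2 * C * (1 + M ^ ((2:ℝ) - t)), by positivity, ?_⟩
  intro N D hN hD hbound
  refine ⟨hθpos, hθlt, ?_⟩
  have hDt : 0 ≤ D ^ t := Real.rpow_nonneg hD _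
  have hD2 : (0:ℝ) ≤ D ^ 2 := sq_nonneg D
  rcases eq_or_lt_of_le hD with hD0 | hD0
  · -- D = 0
    have h1 : Filter.Tendsto (fun s : ℝ => -2 * s * μ₀) Filter.atTop Filter.atBot := by
      have heq : (fun s : ℝ => -2 * s * μ₀) = fun s : ℝ => (-(2 * μ₀)) * s := by
        ext s; ring
      rw [heq]
      exact Filter.Tendsto.const_mul_atTop_of_neg (by linarith) Filter.tendsto_id
    have htend : Filter.Tendsto
        (fun s : ℝ => C * M ^ 2 * Real.exp (-2 * s * μ₀)) Filter.atTop (nhds 0) := by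
      have := (Real.tendsto_exp_atBot.comp h1).const_mul (C * M ^ 2)
      simpa using this
    have hN0 : N ≤ 0 := by
      refine ge_of_tendsto htend ?_
      refine Filter.eventually_atTop.2 ⟨0, fun s hs => ?_⟩
      have := hbound s hs
      simpa [← hD0] using this
    calc N ≤ 0 := hN0
    _ ≤ 2 * C * (1 + M ^ ((2:ℝ) - t)) * (D ^ 2 + D ^ t) := by positivity
  · rcases le_or_gt M D with hMD | hMD
    · -- case M ≤ D : take s = 0
      have hb := hbound 0 le_rfl
      simp only [mul_zero, zero_mul, neg_zero, Real.exp_zero, mul_one, one_mul] at hb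
      have hM2D2 : M ^ 2 ≤ D ^ 2 := by nlinarith
      have hX : 0 ≤ C * (D ^ 2 - M ^ 2) := mul_nonneg hC.le (by linarith)
      nlinarith [mul_nonneg hC.le hDt, mul_nonneg (mul_nonneg hC.le hMt.le) hD2,
        mul_nonneg (mul_nonneg hC.le hMt.le) hDt]
    · -- case 0 < D < M
      set a : ℝ := Real.log M with hadef
      set b : ℝ := Real.log D with hbdef
      have hab : b < a := Real.log_lt_log hD0 hMD
      set s : ℝ := (a - b) / (C + μ₀) with hsdef
      have hs0 : 0 ≤ s := by
        apply div_nonneg (by linarith) hCμ.le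
      have hb' := hbound s hs0
      have hM2 : M ^ 2 = Real.exp (2 * a) := by
        rw [← Real.exp_log (show (0:ℝ) < M ^ 2 by positivity)]
        congr 1
        rw [Real.log_pow]; push_cast; ring
      have hD2' : D ^ 2 = Real.exp (2 * b) := by
        rw [← Real.exp_log (show (0:ℝ) < D ^ 2 by positivity)]
        congr 1
        rw [Real.log_pow]; push_cast; ring
      have hMrt : M ^ ((2:ℝ) - t) = Real.exp (a * ((2:ℝ) - t)) := by
        rw [Real.rpow_def_of_pos hM]
      have hDrt : D ^ t = Real.exp (b * t) := by
        rw [Real.rpow_def_of_pos hD0]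
      have e1 : 2 * a + -2 * s * μ₀ = a * ((2:ℝ) - t) + b * t := by
        rw [hsdef, htdef, hθdef]; field_simp; ring
      have e2 : 2 * C * s + 2 * b = a * ((2:ℝ) - t) + b * t := by
        rw [hsdef, htdef, hθdef]; field_simp; ring
      have key : N ≤ 2 * C * (M ^ ((2:ℝ) - t) * D ^ t) := by
        calc N ≤ C * M ^ 2 * Real.exp (-2 * s * μ₀)
            + C * Real.exp (2 * C * s) * D ^ 2 := hb'
        _ = C * Real.exp (2 * a + -2 * s * μ₀) + C * Real.exp (2 * C * s + 2 * b) := by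
            rw [hM2, hD2', Real.exp_add, Real.exp_add]; ring
        _ = 2 * C * (M ^ ((2:ℝ) - t) * D ^ t) := by
            rw [e1, e2, hMrt, hDrt, ← Real.exp_add]; ring
      nlinarith [mul_nonneg hC.le hD2, mul_nonneg hC.le hDt,
        mul_nonneg (mul_nonneg hC.le hMt.le) hD2]
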